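/- Let F₀ ⊆ F₁ ⊆ ⋯ ⊆ F_T ⊆ F be a finite filtration of sub-σ-algebras, set Q_t := Q_{F_t} for t = 0,…,T, and let T₀ : Ω → Δ(𝒴) be an F₀-measurable random variable. Then E[ℓ(T₀, Y)] = E[d_ℓ(T₀, Q₀)] + ∑_{t=0}^{T−1} E[d_ℓ(Q_t, Q_{t+1})] + E[E_ℓ(Q_T)]. -/

import Mathlib

open MeasureTheory Finset

noncomputable section

/-- The probability simplex on a finite label set `𝒴`, identified with the set of
functions `p : 𝒴 → ℝ` with nonnegative coordinates summing to one. -/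
def simplex (𝒴 : Type*) [Fintype 𝒴] : Set (𝒴 → ℝ) :=
  {p | (∀ y, 0 ≤ p y) ∧ ∑ y, p y = 1}

/-- Conditional risk `L(p,q) := ∑_y q(y) ℓ(p,y)`. -/
def condRisk {𝒴 : Type*} [Fintype 𝒴] (ℓ : (𝒴 → ℝ) → 𝒴 → ℝ) (p q : 𝒴 → ℝ) : ℝ :=
  ∑ y, q y * ℓ p y

/-- Generalized entropy `E_ℓ(q) := L(q,q)`. -/
def gEntropy {𝒴 : Type*} [Fintype 𝒴] (ℓ : (𝒴 → ℝ) → 𝒴 → ℝ) (q : 𝒴 → ℝ) : ℝ :=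
  condRisk ℓ q q

/-- Divergence (regret) `d_ℓ(p,q) := L(p,q) - E_ℓ(q)`. -/
def divg {𝒴 : Type*} [Fintype 𝒴] (ℓ : (𝒴 → ℝ) → 𝒴 → ℝ) (p q : 𝒴 → ℝ) : ℝ :=
  condRisk ℓ p q - gEntropy ℓ q

lemma integrable_of_bdd' {Ω : Type*} {mΩ : MeasurableSpace Ω} {P : Measure Ω}
    [IsFiniteMeasure P] {f : Ω → ℝ} (hf : AEStronglyMeasurable f P) {C : ℝ}
    (h : ∀ ω, |f ω| ≤ C) : Integrable f P :=
  Integrable.mono' (integrable_const C) hf (Filter.Eventually.of_forall fun ω => by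
    simpa [Real.norm_eq_abs] using h ω)

lemma integral_mul_condexp' {Ω : Type*} {mΩ : MeasurableSpace Ω} {P : Measure Ω}
    [IsProbabilityMeasure P] {m : MeasurableSpace Ω} (hm : m ≤ mΩ)
    {g f : Ω → ℝ} (hg : StronglyMeasurable[m] g) (hgf : Integrable (g * f) P)
    (hf : Integrable f P) :
    ∫ ω, g ω * f ω ∂P = ∫ ω, g ω * (P[f|m]) ω ∂P := by
  have h1 : P[g * f|m] =ᵐ[P] g * P[f|m] := condExp_mul_of_stronglyMeasurable_left hg hgf hf
  have h2 : ∫ ω, (P[g * f|m]) ω ∂P = ∫ ω, (g * f) ω ∂P := integral_condExp hm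
  calc ∫ ω, g ω * f ω ∂P = ∫ ω, (g * f) ω ∂P := rfl
    _ = ∫ ω, (P[g * f|m]) ω ∂P := h2.symm
    _ = ∫ ω, (g * P[f|m]) ω ∂P := integral_congr_ae h1
    _ = _ := rfl

lemma aux_tower {Ω 𝒴 : Type*} [Fintype 𝒴] [Nonempty 𝒴]
    [MeasurableSpace 𝒴] [MeasurableSingletonClass 𝒴]
    {mΩ : MeasurableSpace Ω} {P : Measure Ω} [IsProbabilityMeasure P]
    (Y : Ω → 𝒴) (hY : Measurable Y)
    (ℓ : (𝒴 → ℝ) → 𝒴 → ℝ) (hℓmeas : ∀ y, Measurable fun p : 𝒴 → ℝ => ℓ p y)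
    {M : ℝ} (hM : ∀ p ∈ simplex 𝒴, ∀ y, |ℓ p y| ≤ M) (hM0 : 0 ≤ M)
    {m : MeasurableSpace Ω} (hm : m ≤ mΩ)
    (Q : Ω → 𝒴 → ℝ) (hQΔ : ∀ ω, Q ω ∈ simplex 𝒴)
    (hQver : ∀ y, (fun ω => Q ω y)
      =ᵐ[P] P[Set.indicator {ω | Y ω = y} (fun _ => (1 : ℝ)) | m])
    (p : Ω → 𝒴 → ℝ) (hpΔ : ∀ ω, p ω ∈ simplex 𝒴)
    (hpm : ∀ y, Measurable[m] fun ω => p ω y) :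
    ∫ ω, ℓ (p ω) (Y ω) ∂P = ∫ ω, condRisk ℓ (p ω) (Q ω) ∂P := by
  have hpmeas : Measurable[m] p := measurable_pi_lambda _ hpm
  have hg : ∀ y, Measurable[m] fun ω => ℓ (p ω) y := fun y => (hℓmeas y).comp hpmeas
  have hgΩ : ∀ y, Measurable[mΩ] fun ω => ℓ (p ω) y := fun y => (hg y).mono hm le_rfl
  have hgb : ∀ y ω, |ℓ (p ω) y| ≤ M := fun y ω => hM _ (hpΔ ω) y
  have hindm : ∀ y : 𝒴, Measurable[mΩ]
      (Set.indicator {ω | Y ω = y} (fun _ => (1 : ℝ))) := by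
    intro y
    have : MeasurableSet[mΩ] {ω | Y ω = y} := hY (measurableSet_singleton y)
    exact measurable_const.indicator this
  have hindb : ∀ (y : 𝒴) ω, |Set.indicator {ω | Y ω = y} (fun _ => (1 : ℝ)) ω| ≤ 1 := by
    intro y ω
    by_cases h : ω ∈ {ω | Y ω = y} <;> simp [Set.indicator_apply, h]
  have hpt : ∀ ω, ℓ (p ω) (Y ω)
      = ∑ y, ℓ (p ω) y * Set.indicator {ω' | Y ω' = y} (fun _ => (1 : ℝ)) ω := by
    intro ω
    rw [Finset.sum_eq_single (Y ω)]
    · simp [Set.indicator_apply]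
    · intro b _ hb
      have : ω ∉ {ω' | Y ω' = b} := by exact fun h => hb h.symm
      simp [Set.indicator_of_notMem this]
    · simp
  have hQb : ∀ ω y, |Q ω y| ≤ 1 := by
    intro ω y
    have h1 := (hQΔ ω).1
    have h2 := (hQΔ ω).2
    rw [abs_of_nonneg (h1 y)]
    calc Q ω y ≤ ∑ z, Q ω z := Finset.single_le_sum (fun z _ => h1 z) (Finset.mem_univ y)
      _ = 1 := h2
  have hQm : ∀ y, @AEStronglyMeasurable _ _ _ mΩ mΩ (fun ω => Q ω y) P := fun y =>
    ((stronglyMeasurable_condExp.mono hm).aestronglyMeasurable).congr (hQver y).symm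
  have hint1 : ∀ y : 𝒴, Integrable
      (fun ω => ℓ (p ω) y * Set.indicator {ω' | Y ω' = y} (fun _ => (1 : ℝ)) ω) P := by
    intro y
    refine integrable_of_bdd' ((hgΩ y).mul (hindm y)).aestronglyMeasurable (C := M) ?_
    intro ω
    rw [abs_mul]
    calc |ℓ (p ω) y| * |Set.indicator {ω' | Y ω' = y} (fun _ => (1 : ℝ)) ω|
        ≤ M * 1 := mul_le_mul (hgb y ω) (hindb y ω) (abs_nonneg _) hM0
      _ = M := mul_one M
  have hint2 : ∀ y : 𝒴, Integrable (fun ω => ℓ (p ω) y * Q ω y) P := by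
    intro y
    refine integrable_of_bdd' ((hgΩ y).aestronglyMeasurable.mul (hQm y)) (C := M) ?_
    intro ω
    rw [abs_mul]
    calc |ℓ (p ω) y| * |Q ω y| ≤ M * 1 := mul_le_mul (hgb y ω) (hQb ω y) (abs_nonneg _) hM0
      _ = M := mul_one M
  calc ∫ ω, ℓ (p ω) (Y ω) ∂P
      = ∫ ω, ∑ y, ℓ (p ω) y * Set.indicator {ω' | Y ω' = y} (fun _ => (1 : ℝ)) ω ∂P :=
        integral_congr_ae (Filter.Eventually.of_forall hpt)
    _ = ∑ y, ∫ ω, ℓ (p ω) y * Set.indicator {ω' | Y ω' = y} (fun _ => (1 : ℝ)) ω ∂P :=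
        integral_finset_sum _ fun y _ => hint1 y
    _ = ∑ y, ∫ ω, ℓ (p ω) y * Q ω y ∂P := by
        refine Finset.sum_congr rfl fun y _ => ?_
        have hIf : Integrable (Set.indicator {ω | Y ω = y} (fun _ => (1 : ℝ))) P :=
          integrable_of_bdd' (hindm y).aestronglyMeasurable (hindb y)
        have := integral_mul_condexp' hm (hg y).stronglyMeasurable (hint1 y) hIf
        rw [this]
        refine integral_congr_ae ?_
        filter_upwards [hQver y] with ω h
        rw [h]
    _ = ∫ ω, ∑ y, ℓ (p ω) y * Q ω y ∂P := (integral_finset_sum _ fun y _ => hint2 y).symm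
    _ = ∫ ω, condRisk ℓ (p ω) (Q ω) ∂P := by
        refine integral_congr_ae (Filter.Eventually.of_forall fun ω => ?_)
        simp [condRisk, mul_comm]

/-- telescoping decomposition along a filtration. Let
`F 0 ⊆ F 1 ⊆ ⋯ ⊆ F N ⊆ mΩ` be a finite filtration, `Q t := Q_{F t}`, and `T₀` an
`F 0`-measurable `Δ(𝒴)`-valued predictor. Then
`E[ℓ(T₀,Y)] = E[d_ℓ(T₀,Q₀)] + ∑_{t<N} E[d_ℓ(Q_t,Q_{t+1})] + E[E_ℓ(Q_N)]`. -/
theorem telescoping_decomposition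
    {Ω 𝒴 : Type*} [Fintype 𝒴] [Nonempty 𝒴]
    [MeasurableSpace 𝒴] [MeasurableSingletonClass 𝒴]
    {mΩ : MeasurableSpace Ω} {P : Measure Ω} [IsProbabilityMeasure P]
    (Y : Ω → 𝒴) (hY : Measurable Y)
    (ℓ : (𝒴 → ℝ) → 𝒴 → ℝ)
    (hℓmeas : ∀ y, Measurable fun p : 𝒴 → ℝ => ℓ p y)
    (hℓbdd : ∃ M : ℝ, ∀ p ∈ simplex 𝒴, ∀ y, |ℓ p y| ≤ M)
    (N : ℕ) (F : ℕ → MeasurableSpace Ω)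
    (hFmono : ∀ s t : ℕ, s ≤ t → t ≤ N → F s ≤ F t)
    (hFle : ∀ t ≤ N, F t ≤ mΩ)
    (Q : ℕ → Ω → 𝒴 → ℝ)
    (hQΔ : ∀ t ≤ N, ∀ ω, Q t ω ∈ simplex 𝒴)
    (hQmeas : ∀ t ≤ N, ∀ y, Measurable[F t] fun ω => Q t ω y)
    (hQver : ∀ t ≤ N, ∀ y, (fun ω => Q t ω y)
      =ᵐ[P] P[Set.indicator {ω | Y ω = y} (fun _ => (1 : ℝ)) | F t])
    (T₀ : Ω → 𝒴 → ℝ) (hT₀Δ : ∀ ω, T₀ ω ∈ simplex 𝒴)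
    (hT₀meas : ∀ y, Measurable[F 0] fun ω => T₀ ω y) :
    ∫ ω, ℓ (T₀ ω) (Y ω) ∂P
      = ∫ ω, divg ℓ (T₀ ω) (Q 0 ω) ∂P
        + ∑ t ∈ Finset.range N, ∫ ω, divg ℓ (Q t ω) (Q (t + 1) ω) ∂P
        + ∫ ω, gEntropy ℓ (Q N ω) ∂P := by
  obtain ⟨M, hM⟩ := hℓbdd
  -- M is nonnegative since the simplex is nonempty
  have hunif : (fun _ : 𝒴 => ((Fintype.card 𝒴 : ℝ))⁻¹) ∈ simplex 𝒴 := by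
    constructor
    · intro y; positivity
    · have hc : (Fintype.card 𝒴 : ℝ) ≠ 0 := by
        exact_mod_cast Fintype.card_ne_zero
      simp [Finset.sum_const, mul_comm, hc]
  have hM0 : 0 ≤ M :=
    le_trans (abs_nonneg _) (hM _ hunif (Classical.arbitrary 𝒴))
  have hQm : ∀ t ≤ N, ∀ y, Measurable[mΩ] fun ω => Q t ω y := fun t ht y =>
    (hQmeas t ht y).mono (hFle t ht) le_rfl
  have hT₀m : ∀ y, Measurable[mΩ] fun ω => T₀ ω y := fun y =>
    (hT₀meas y).mono (hFle 0 (Nat.zero_le N)) le_rfl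
  -- bounds on condRisk / gEntropy / divg over the simplex
  have hCRb : ∀ p ∈ simplex 𝒴, ∀ q ∈ simplex 𝒴, |condRisk ℓ p q| ≤ M := by
    intro p hp q hq
    calc |condRisk ℓ p q| ≤ ∑ y, |q y * ℓ p y| := Finset.abs_sum_le_sum_abs _ _
      _ ≤ ∑ y, q y * M := by
          refine Finset.sum_le_sum fun y _ => ?_
          rw [abs_mul, abs_of_nonneg (hq.1 y)]
          exact mul_le_mul_of_nonneg_left (hM p hp y) (hq.1 y)
      _ = M := by rw [← Finset.sum_mul, hq.2, one_mul]
  have hdivb : ∀ p ∈ simplex 𝒴, ∀ q ∈ simplex 𝒴, |divg ℓ p q| ≤ 2 * M := by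
    intro p hp q hq
    calc |divg ℓ p q| ≤ |condRisk ℓ p q| + |gEntropy ℓ q| := abs_sub _ _
      _ ≤ M + M := add_le_add (hCRb p hp q hq) (hCRb q hq q hq)
      _ = 2 * M := by ring
  -- measurability of composed integrands
  have hlm : ∀ (p : Ω → 𝒴 → ℝ), (∀ y, Measurable[mΩ] fun ω => p ω y) →
      ∀ y, Measurable[mΩ] fun ω => ℓ (p ω) y := fun p hp y =>
    (hℓmeas y).comp (measurable_pi_lambda _ hp)
  have hCRm : ∀ (p q : Ω → 𝒴 → ℝ), (∀ y, Measurable[mΩ] fun ω => p ω y) →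
      (∀ y, Measurable[mΩ] fun ω => q ω y) →
      Measurable[mΩ] fun ω => condRisk ℓ (p ω) (q ω) := by
    intro p q hp hq
    unfold condRisk
    exact Finset.measurable_sum _ fun y _ => (hq y).mul (hlm p hp y)
  -- integrability facts
  have hGint : ∀ t ≤ N, Integrable (fun ω => gEntropy ℓ (Q t ω)) P := by
    intro t ht
    exact integrable_of_bdd' (hCRm _ _ (hQm t ht) (hQm t ht)).aestronglyMeasurable
      (fun ω => hCRb _ (hQΔ t ht ω) _ (hQΔ t ht ω))
  have hDint : ∀ (p q : Ω → 𝒴 → ℝ), (∀ y, Measurable[mΩ] fun ω => p ω y) →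
      (∀ y, Measurable[mΩ] fun ω => q ω y) → (∀ ω, p ω ∈ simplex 𝒴) →
      (∀ ω, q ω ∈ simplex 𝒴) → Integrable (fun ω => divg ℓ (p ω) (q ω)) P := by
    intro p q hp hq hpΔ hqΔ
    have hm : Measurable[mΩ] fun ω => divg ℓ (p ω) (q ω) := by
      unfold divg gEntropy
      exact (hCRm p q hp hq).sub (hCRm q q hq hq)
    exact integrable_of_bdd' hm.aestronglyMeasurable
      (fun ω => hdivb _ (hpΔ ω) _ (hqΔ ω))
  -- splitting of condRisk integrals
  have hsplit : ∀ t ≤ N, ∀ (p : Ω → 𝒴 → ℝ), (∀ y, Measurable[mΩ] fun ω => p ω y) →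
      (∀ ω, p ω ∈ simplex 𝒴) →
      ∫ ω, condRisk ℓ (p ω) (Q t ω) ∂P
        = ∫ ω, divg ℓ (p ω) (Q t ω) ∂P + ∫ ω, gEntropy ℓ (Q t ω) ∂P := by
    intro t ht p hp hpΔ
    rw [← integral_add (hDint p (Q t) hp (hQm t ht) hpΔ (hQΔ t ht)) (hGint t ht)]
    refine integral_congr_ae (Filter.Eventually.of_forall fun ω => ?_)
    simp [divg]
  -- the tower property
  have key : ∀ t ≤ N, ∀ (p : Ω → 𝒴 → ℝ), (∀ ω, p ω ∈ simplex 𝒴) →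
      (∀ y, Measurable[F t] fun ω => p ω y) →
      ∫ ω, ℓ (p ω) (Y ω) ∂P = ∫ ω, condRisk ℓ (p ω) (Q t ω) ∂P :=
    fun t ht p hpΔ hpm =>
      aux_tower Y hY ℓ hℓmeas hM hM0 (hFle t ht) (Q t) (hQΔ t ht) (hQver t ht) p hpΔ hpm
  -- one-step telescoping identity
  have hstep : ∀ t, t < N →
      ∫ ω, gEntropy ℓ (Q t ω) ∂P
        = ∫ ω, divg ℓ (Q t ω) (Q (t + 1) ω) ∂P + ∫ ω, gEntropy ℓ (Q (t + 1) ω) ∂P := by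
    intro t ht
    have ht' : t ≤ N := ht.le
    have ht1 : t + 1 ≤ N := ht
    have h1 := key t ht' (Q t) (hQΔ t ht') (hQmeas t ht')
    have h2 := key (t + 1) ht1 (Q t) (hQΔ t ht')
      (fun y => (hQmeas t ht' y).mono (hFmono t (t + 1) (Nat.le_succ t) ht1) le_rfl)
    have hE : ∫ ω, gEntropy ℓ (Q t ω) ∂P = ∫ ω, condRisk ℓ (Q t ω) (Q t ω) ∂P := rfl
    rw [hE, ← h1, h2, hsplit (t + 1) ht1 (Q t) (hQm t ht') (hQΔ t ht')]
  -- telescoping sum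
  have htel : ∀ n ≤ N,
      ∫ ω, gEntropy ℓ (Q 0 ω) ∂P
        = ∑ t ∈ Finset.range n, ∫ ω, divg ℓ (Q t ω) (Q (t + 1) ω) ∂P
          + ∫ ω, gEntropy ℓ (Q n ω) ∂P := by
    intro n
    induction n with
    | zero => simp
    | succ n ih =>
      intro h
      rw [ih (Nat.le_of_succ_le h), Finset.sum_range_succ,
        hstep n (Nat.lt_of_succ_le h)]
      ring
  rw [key 0 (Nat.zero_le N) T₀ hT₀Δ hT₀meas,
    hsplit 0 (Nat.zero_le N) T₀ hT₀m hT₀Δ, htel N le_rfl]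
  ring
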